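/- The ultimate diagonal set yields a contradiction: the theory BST ∪ {pair, extract, Z-separ} is unsatisfiable (it has no model). -/

import Mathlib

open FirstOrder FirstOrder.Language

namespace UltimateDiagonal

/-- The language `L` with a single binary relation symbol `∈`. -/
def L0 : Language := ⟨fun _ => Empty, fun n => match n with | 2 => Unit | _ => Empty⟩

/-- The language `L_Z`: `L` extended with one constant symbol `Z`. -/
abbrev LZ : Language := L0[[Unit]]

/-- The constant symbol `Z`. -/
def cZ : LZ.Constants := L0.con ()

/-- The membership relation symbol of `L_Z`. -/
def memRel : LZ.Relations 2 := Sum.inl Unit.unit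

/-- `memF t₁ t₂` is the atomic formula `t₁ ∈ t₂`. -/
def memF {n : ℕ} (t₁ t₂ : LZ.Term (Empty ⊕ Fin n)) : LZ.BoundedFormula Empty n :=
  memRel.boundedFormula₂ t₁ t₂

/-- Inclusion of a term in context `n` into the larger context `n + k`. -/
def tl {n : ℕ} (k : ℕ) (t : LZ.Term (Empty ⊕ Fin n)) : LZ.Term (Empty ⊕ Fin (n + k)) :=
  t.relabel (Sum.map id (Fin.castAdd k))

/-- `z = ⟨a,b⟩` (Kuratowski pair), as the formula
`∃p∃q(∀x(x∈p ↔ x=a) ∧ ∀x(x∈q ↔ (x=a ∨ x=b)) ∧ ∀x(x∈z ↔ (x=p ∨ x=q)))`. -/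
def isPairF {n : ℕ} (z a b : LZ.Term (Empty ⊕ Fin n)) : LZ.BoundedFormula Empty n :=
  ∃' ∃' (
    (∀' (memF (&⟨n + 2, by omega⟩) (&⟨n, by omega⟩) ⇔
        ((&(⟨n + 2, by omega⟩ : Fin (n + 3))) =' tl 3 a))) ⊓
    (∀' (memF (&⟨n + 2, by omega⟩) (&⟨n + 1, by omega⟩) ⇔
        (((&(⟨n + 2, by omega⟩ : Fin (n + 3))) =' tl 3 a) ⊔
         ((&(⟨n + 2, by omega⟩ : Fin (n + 3))) =' tl 3 b)))) ⊓
    (∀' (memF (&⟨n + 2, by omega⟩) (tl 3 z) ⇔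
        (((&(⟨n + 2, by omega⟩ : Fin (n + 3))) =' (&⟨n, by omega⟩)) ⊔
         ((&(⟨n + 2, by omega⟩ : Fin (n + 3))) =' (&⟨n + 1, by omega⟩))))))

/-- Extensionality: `∀y∀z(∀x(x∈y ↔ x∈z) → y=z)`. -/
def extAx : LZ.Sentence :=
  ∀' ∀' ((∀' (memF (&2) (&0) ⇔ memF (&2) (&1))) ⟹ ((&0) =' (&1)))

/-- Basic set theory: the theory whose only axiom is extensionality. -/
def BST : LZ.Theory := {extAx}

/-- Pairing: `∀a∀b∃y∀x(x∈y ↔ (x=a ∨ x=b))`. -/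
def pairAx : LZ.Sentence :=
  ∀' ∀' ∃' ∀' (memF (&3) (&2) ⇔ (((&3) =' (&0)) ⊔ ((&3) =' (&1))))

/-- Extracting: `∀a∃y∀x(x∈y ↔ ∃z(z=⟨a,x⟩ ∧ z∈a))`. -/
def extractAx : LZ.Sentence :=
  ∀' ∃' ∀' (memF (&2) (&1) ⇔ ∃' (isPairF (&3) (&0) (&2) ⊓ memF (&3) (&0)))

/-- `Z-separ`: the axiom `∀x(x∈Z ↔ ∃v∃w(x=⟨v,w⟩ ∧ ¬(w∈v[v])))`, where `w∈v[v]`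
abbreviates `∃z(z=⟨v,w⟩ ∧ z∈v)`. -/
def zSeparAx : LZ.Sentence :=
  ∀' (memF (&0) (Constants.term cZ) ⇔
    ∃' ∃' (isPairF (&0) (&1) (&2) ⊓
      ∼(∃' (isPairF (&3) (&1) (&2) ⊓ memF (&3) (&1)))))

/-! ### Semantics -/

section Semantics

variable {M : Type*} [LZ.Structure M]

/-- Semantic membership. -/
def mem (a b : M) : Prop := Structure.RelMap (L := LZ) memRel ![a, b]

/-- Semantic Kuratowski pairing statement. -/
def IsPair (z a b : M) : Prop :=
  ∃ p q : M, (∀ x, mem x p ↔ x = a) ∧ (∀ x, mem x q ↔ x = a ∨ x = b) ∧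
    (∀ x, mem x z ↔ x = p ∨ x = q)

lemma realize_memF {n} (t₁ t₂ : LZ.Term (Empty ⊕ Fin n)) (v : Empty → M) (xs : Fin n → M) :
    (memF t₁ t₂).Realize v xs ↔ mem (t₁.realize (Sum.elim v xs)) (t₂.realize (Sum.elim v xs)) := by
  simp [memF, mem, BoundedFormula.realize_rel₂]

lemma realize_tl {n} (t : LZ.Term (Empty ⊕ Fin n)) (v : Empty → M) (xs : Fin n → M)
    (p q r : M) :
    Term.realize (Sum.elim v (Fin.snoc (Fin.snoc (Fin.snoc xs p) q) r)) (tl 3 t)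
      = t.realize (Sum.elim v xs) := by
  simp [tl, Term.realize_relabel]
  congr 1
  funext x
  cases x with
  | inl e => exact e.elim
  | inr i =>
      have h := i.is_lt
      simp [Fin.snoc, Fin.castAdd, Fin.castLT]
      exact fun h' => absurd h' (by omega)

@[simp] lemma snoc3_0 {α : Type*} {n} (xs : Fin n → α) (p q r : α) (h : n < n + 3) :
    (Fin.snoc (Fin.snoc (Fin.snoc xs p) q) r : Fin (n+3) → α) ⟨n, h⟩ = p := by
  simp [Fin.snoc]

@[simp] lemma snoc3_1 {α : Type*} {n} (xs : Fin n → α) (p q r : α) (h : n + 1 < n + 3) :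
    (Fin.snoc (Fin.snoc (Fin.snoc xs p) q) r : Fin (n+3) → α) ⟨n + 1, h⟩ = q := by
  simp [Fin.snoc]

@[simp] lemma snoc3_2 {α : Type*} {n} (xs : Fin n → α) (p q r : α) (h : n + 2 < n + 3) :
    (Fin.snoc (Fin.snoc (Fin.snoc xs p) q) r : Fin (n+3) → α) ⟨n + 2, h⟩ = r := by
  simp [Fin.snoc]

lemma realize_isPairF {n} (z a b : LZ.Term (Empty ⊕ Fin n)) (v : Empty → M) (xs : Fin n → M) :
    (isPairF z a b).Realize v xs ↔
      IsPair (z.realize (Sum.elim v xs)) (a.realize (Sum.elim v xs)) (b.realize (Sum.elim v xs)) := by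
  simp only [isPairF, IsPair, BoundedFormula.realize_ex, BoundedFormula.realize_inf,
    BoundedFormula.realize_all, BoundedFormula.realize_iff, realize_memF,
    BoundedFormula.realize_sup, BoundedFormula.realize_bdEqual, realize_tl,
    Term.realize_var, Function.comp, Sum.elim_inr, snoc3_0, snoc3_1, snoc3_2]
  tauto

lemma sem_ext (h : M ⊨ extAx) : ∀ y z : M, (∀ x, mem x y ↔ mem x z) → y = z := by
  simp only [extAx, Sentence.Realize, Formula.Realize, BoundedFormula.realize_all,
    BoundedFormula.realize_imp, BoundedFormula.realize_iff, realize_memF,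
    BoundedFormula.realize_bdEqual, Term.realize_var, Function.comp, Sum.elim_inr] at h
  intro y z hx
  convert h y z ?_ using 0 <;> simp [Fin.snoc]
  exact hx

lemma sem_pair (h : M ⊨ pairAx) : ∀ a b : M, ∃ y, ∀ x, mem x y ↔ x = a ∨ x = b := by
  simp only [pairAx, Sentence.Realize, Formula.Realize, BoundedFormula.realize_all,
    BoundedFormula.realize_ex, BoundedFormula.realize_iff, realize_memF,
    BoundedFormula.realize_sup, BoundedFormula.realize_bdEqual, Term.realize_var,
    Function.comp, Sum.elim_inr] at h
  intro a b
  obtain ⟨y, hy⟩ := h a b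
  refine ⟨y, fun x => ?_⟩
  have := hy x
  convert this using 0 <;> simp [Fin.snoc]

lemma sem_extract (h : M ⊨ extractAx) :
    ∀ a : M, ∃ y, ∀ x, mem x y ↔ ∃ z, IsPair z a x ∧ mem z a := by
  simp only [extractAx, Sentence.Realize, Formula.Realize, BoundedFormula.realize_all,
    BoundedFormula.realize_ex, BoundedFormula.realize_iff, realize_memF,
    BoundedFormula.realize_inf, realize_isPairF, Term.realize_var,
    Function.comp, Sum.elim_inr] at h
  intro a
  obtain ⟨y, hy⟩ := h a
  refine ⟨y, fun x => ?_⟩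
  have := hy x
  convert this using 0 <;> simp [Fin.snoc]

lemma sem_zsepar (h : M ⊨ zSeparAx) :
    ∀ x : M, mem x (Structure.funMap (L := LZ) (cZ : LZ.Functions 0) ![]) ↔
      ∃ v w, IsPair x v w ∧ ¬ ∃ z, IsPair z v w ∧ mem z v := by
  simp only [zSeparAx, Sentence.Realize, Formula.Realize, BoundedFormula.realize_all,
    BoundedFormula.realize_ex, BoundedFormula.realize_iff, realize_memF,
    BoundedFormula.realize_inf, BoundedFormula.realize_not, realize_isPairF,
    Term.realize_var, Term.realize_constants, Function.comp, Sum.elim_inr] at h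
  intro x
  have := h x
  convert this using 0 <;> simp [Fin.snoc, funMap_eq_coe_constants]

end Semantics

section Contradiction

variable {M : Type*} [LZ.Structure M]
variable (hext : ∀ y z : M, (∀ x, mem x y ↔ mem x z) → y = z)

include hext in
/-- Extensionality implies uniqueness of pairs. -/
lemma pair_unique {z z' a b : M} (h : IsPair z a b) (h' : IsPair z' a b) : z = z' := by
  obtain ⟨p, q, h1, h2, h3⟩ := h
  obtain ⟨p', q', g1, g2, g3⟩ := h'
  have hp : p = p' := hext _ _ fun x => (h1 x).trans (g1 x).symm
  have hq : q = q' := hext _ _ fun x => (h2 x).trans (g2 x).symm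
  subst hp; subst hq
  exact hext _ _ fun x => (h3 x).trans (g3 x).symm

/-- Kuratowski pair injectivity, using extensionality. -/
lemma pair_inj {z a b v w : M} (h : IsPair z a b) (h' : IsPair z v w) :
    a = v ∧ b = w := by
  obtain ⟨p, q, h1, h2, h3⟩ := h
  obtain ⟨p', q', g1, g2, g3⟩ := h'
  -- {p,q} = {p',q'}
  have hpq : ∀ x : M, (x = p ∨ x = q) ↔ (x = p' ∨ x = q') :=
    fun x => (h3 x).symm.trans (g3 x)
  -- membership facts
  have hap : mem a p := (h1 a).mpr rfl
  have hvp' : mem v p' := (g1 v).mpr rfl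
  have hpeq : ∀ x y : M, (∀ u, mem u x ↔ u = y) → ∀ u, mem u x → u = y :=
    fun x y hx u hu => (hx u).mp hu
  rcases (hpq p).mp (Or.inl rfl) with hpp' | hpq'
  · -- p = p', hence a = v
    have hav : a = v := by
      have : mem a p' := hpp' ▸ hap
      exact (g1 a).mp this
    refine ⟨hav, ?_⟩
    rcases (hpq q).mp (Or.inr rfl) with hqp' | hqq'
    · -- q = p' = {v} : so b = a = v and then w = v = b
      have hb : b = v := by
        have : mem b q := (h2 b).mpr (Or.inr rfl)
        exact (g1 b).mp (hqp' ▸ this)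
      have hq'mem : q' = p ∨ q' = q := (hpq q').mpr (Or.inr rfl)
      have hw : w = v := by
        have hwq' : mem w q' := (g2 w).mpr (Or.inr rfl)
        rcases hq'mem with h' | h'
        · have : mem w p := h' ▸ hwq'
          have : w = a := (h1 w).mp this
          rw [this, hav]
        · have : mem w q := h' ▸ hwq'
          rcases (h2 w).mp this with h'' | h''
          · rw [h'', hav]
          · rw [h'', hb]
      rw [hb, hw]
    · -- q = q' : {a,b} = {v,w}
      have hbq' : mem b q' := hqq' ▸ (h2 b).mpr (Or.inr rfl)
      rcases (g2 b).mp hbq' with hb | hb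
      · -- b = v = a; then w ∈ {a,b} = {a}, so w = a = b
        have hwq : mem w q := by
          have : mem w q' := (g2 w).mpr (Or.inr rfl)
          rw [hqq']; exact this
        rcases (h2 w).mp hwq with hw | hw
        · rw [hb, ← hav, ← hw]
        · rw [← hw]
      · exact hb
  · -- p = q' : {a} = {v,w}, so v = w = a
    have hva : v = a := by
      have : mem v p := by rw [hpq']; exact (g2 v).mpr (Or.inl rfl)
      exact (h1 v).mp this
    have hwa : w = a := by
      have : mem w p := by rw [hpq']; exact (g2 w).mpr (Or.inr rfl)
      exact (h1 w).mp this
    -- also p' ∈ {p, q}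
    have hbw : b = w := by
      rcases (hpq p').mpr (Or.inl rfl) with h' | h'
      · -- p' = p : {v} = {a}; q ∈ {p', q'}
        rcases (hpq q).mp (Or.inr rfl) with h'' | h''
        · -- q = p' = p = {a}: b = a
          have : mem b q := (h2 b).mpr (Or.inr rfl)
          have : mem b p := by rw [← h', ← h'']; exact this
          have hba := (h1 b).mp this
          rw [hba, hwa]
        · -- q = q' = {v, w} = {a}: b ∈ {v,w}
          have : mem b q := (h2 b).mpr (Or.inr rfl)
          have : mem b q' := by rw [← h'']; exact this
          rcases (g2 b).mp this with h3' | h3'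
          · rw [h3', hva, hwa]
          · exact h3'
      · -- p' = q : {v} = {a, b}: b ∈ {v}... b ∈ q = p', so b = v = a = w
        have : mem b q := (h2 b).mpr (Or.inr rfl)
        have : mem b p' := by rw [h']; exact this
        have hbv := (g1 b).mp this
        rw [hbv, hva, hwa]
    exact ⟨hva.symm, hbw⟩

/-- Pairing gives existence of Kuratowski pairs. -/
lemma pair_exists (hpair : ∀ a b : M, ∃ y, ∀ x, mem x y ↔ x = a ∨ x = b) (a b : M) :
    ∃ z, IsPair z a b := by
  obtain ⟨p, hp⟩ := hpair a a
  obtain ⟨q, hq⟩ := hpair a b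
  obtain ⟨z, hz⟩ := hpair p q
  exact ⟨z, p, q, fun x => (hp x).trans (or_self_iff), hq, hz⟩

end Contradiction


/-- The ultimate diagonal set yields a contradiction: `BST ∪ {pair, extract, Z-separ}`
is unsatisfiable. -/
theorem ultimate_diagonal_unsatisfiable :
    ¬ (BST ∪ {pairAx, extractAx, zSeparAx}).IsSatisfiable := by
  rintro ⟨M⟩
  have hmod : ∀ φ ∈ (BST ∪ {pairAx, extractAx, zSeparAx} : LZ.Theory), M ⊨ φ :=
    fun φ hφ => M.is_model.realize_of_mem φ hφ
  have hext := sem_ext (M := M) (hmod extAx (by simp [BST]))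
  have hpair := sem_pair (M := M) (hmod pairAx (by simp [BST]))
  have hextract := sem_extract (M := M) (hmod extractAx (by simp [BST]))
  have hz := sem_zsepar (M := M) (hmod zSeparAx (by simp [BST]))
  set Z : M := Structure.funMap (L := LZ) (cZ : LZ.Functions 0) ![] with hZ
  obtain ⟨D, hD⟩ := hextract Z
  obtain ⟨z0, hz0⟩ := pair_exists hpair Z D
  by_cases hmem : mem z0 Z
  · obtain ⟨v, w, hvw, hno⟩ := (hz z0).mp hmem
    obtain ⟨hv, hw⟩ := pair_inj hz0 hvw
    subst hv; subst hw
    exact hno ⟨z0, hz0, hmem⟩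
  · have : mem z0 Z := by
      refine (hz z0).mpr ⟨Z, D, hz0, ?_⟩
      rintro ⟨z', hz', hmem'⟩
      exact hmem ((pair_unique hext hz0 hz') ▸ hmem')
    exact hmem this

end UltimateDiagonal
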